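/- Let 𝒜 = {A_0, A_1, …} be a collection of subsets of a commutative monoid, each containing 0, whose sumset is direct, and let ℬ ⊆ 𝒜. Then the sumset of the contraction (𝒜 ∖ ℬ) ∪ {⊕ℬ} is also direct, and it equals the sumset of 𝒜. In particular, if 𝒜 is an additive system (every element of the monoid has exactly one representation), then so is every contraction of 𝒜. -/

import Mathlib

/-- `a` is a representation of `n` in the collection `A`: each `a i ∈ A i`,
all but finitely many `a i` are zero, and `n = Σ_i a i`. -/
def IsRepr {M : Type*} [AddCommMonoid M] {ι : Type*} (A : ι → Set M) (n : M) (a : ι → M) :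
    Prop :=
  (∀ i, a i ∈ A i) ∧ (Function.support a).Finite ∧ n = ∑ᶠ i, a i

/-- The sumset of a collection: the set of elements admitting a representation. -/
def Sumset {M : Type*} [AddCommMonoid M] {ι : Type*} (A : ι → Set M) : Set M :=
  {n | ∃ a, IsRepr A n a}

/-- The sumset of a collection is direct when representations are unique. -/
def IsDirect {M : Type*} [AddCommMonoid M] {ι : Type*} (A : ι → Set M) : Prop :=
  ∀ n a a', IsRepr A n a → IsRepr A n a' → a = a'

/-- The contraction of the collection `A` with respect to the subcollection `{A i : i ∈ S}`:
the sets `A i` with `i ∈ S` are replaced by their (direct) sumset. -/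
def contraction {M : Type*} [AddCommMonoid M] (A : ℕ → Set M) (S : Set ℕ) :
    ({i : ℕ // i ∉ S} ⊕ Unit) → Set M :=
  Sum.elim (fun i => A i.1) (fun _ => Sumset (fun i : S => A i.1))

open Function Set
open scoped Classical

lemma finsum_sumtype {α β M : Type*} [AddCommMonoid M] (f : α ⊕ β → M)
    (hf : (support f).Finite) :
    ∑ᶠ x, f x = (∑ᶠ a, f (Sum.inl a)) + ∑ᶠ b, f (Sum.inr b) := by
  rw [← finsum_mem_univ, ← Set.range_inl_union_range_inr,
    finsum_mem_union' Set.isCompl_range_inl_range_inr.disjoint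
      (hf.inter_of_right _) (hf.inter_of_right _),
    finsum_mem_range Sum.inl_injective, finsum_mem_range Sum.inr_injective]

lemma split_finsum {M : Type*} [AddCommMonoid M] (S : Set ℕ) (a : ℕ → M)
    (ha : (support a).Finite) :
    ∑ᶠ i, a i = (∑ᶠ j : {i // i ∉ S}, a j.1) + ∑ᶠ i : S, a i.1 := by
  have huniv : (Set.univ : Set ℕ) = {i | i ∉ S} ∪ S := by
    ext i; by_cases h : i ∈ S <;> simp [h]
  have hdisj : Disjoint {i | i ∉ S} S := by
    rw [Set.disjoint_left]; intro i hi; exact hi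
  rw [← finsum_mem_univ, huniv,
    finsum_mem_union' hdisj (ha.inter_of_right _) (ha.inter_of_right _),
    ← finsum_set_coe_eq_finsum_mem, ← finsum_set_coe_eq_finsum_mem]
  rfl

/-- Combining a representation in the contraction with a representation of its `Sum.inr`
component gives a representation in the original collection. -/
lemma expand_repr {M : Type*} [AddCommMonoid M] {A : ℕ → Set M} {S : Set ℕ} {n : M}
    {b : ({i : ℕ // i ∉ S} ⊕ Unit) → M} {c : S → M}
    (hb : IsRepr (contraction A S) n b)
    (hc : IsRepr (fun i : S => A i.1) (b (Sum.inr ())) c) :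
    IsRepr A n (fun i => if h : i ∈ S then c ⟨i, h⟩ else b (Sum.inl ⟨i, h⟩)) := by
  obtain ⟨hbmem, hbfin, hbsum⟩ := hb
  obtain ⟨hcmem, hcfin, hcsum⟩ := hc
  set a : ℕ → M := fun i => if h : i ∈ S then c ⟨i, h⟩ else b (Sum.inl ⟨i, h⟩) with ha
  have hafin : (support a).Finite := by
    apply Set.Finite.subset ((hcfin.image Subtype.val).union
      ((hbfin.preimage (Sum.inl_injective.injOn)).image (fun j => j.1)))
    intro i hi
    by_cases h : i ∈ S
    · exact Or.inl ⟨⟨i, h⟩, by simpa [ha, h] using hi, rfl⟩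
    · exact Or.inr ⟨⟨i, h⟩, by simpa [ha, h] using hi, rfl⟩
  refine ⟨fun i => ?_, hafin, ?_⟩
  · by_cases h : i ∈ S
    · simpa [ha, h] using hcmem ⟨i, h⟩
    · simpa [ha, h, contraction] using hbmem (Sum.inl ⟨i, h⟩)
  · rw [split_finsum S a hafin]
    have h1 : (∑ᶠ j : {i // i ∉ S}, a j.1) = ∑ᶠ j : {i // i ∉ S}, b (Sum.inl j) :=
      finsum_congr fun j => by simp [ha, j.2]
    have h2 : (∑ᶠ i : S, a i.1) = ∑ᶠ i : S, c i :=
      finsum_congr fun i => by simp [ha, i.2]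
    rw [h1, h2, ← hcsum, hbsum, finsum_sumtype b hbfin, finsum_unique (fun u => b (Sum.inr u))]

/-- A representation in the original collection contracts to one in the contraction. -/
lemma contract_repr {M : Type*} [AddCommMonoid M] {A : ℕ → Set M} (S : Set ℕ) {n : M}
    {a : ℕ → M} (ha : IsRepr A n a) :
    IsRepr (contraction A S) n
      (Sum.elim (fun j => a j.1) (fun _ => ∑ᶠ i : S, a i.1)) := by
  obtain ⟨hamem, hafin, hasum⟩ := ha
  have hres : (support fun i : S => a i.1).Finite :=
    (hafin.preimage (Subtype.val_injective.injOn))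
  refine ⟨?_, ?_, ?_⟩
  · rintro (j | u)
    · exact hamem j.1
    · exact ⟨fun i => a i.1, fun i => hamem i.1, hres, rfl⟩
  · apply Set.Finite.subset
      (((hafin.preimage (Subtype.val_injective.injOn)).image Sum.inl).union
        (Set.finite_singleton (Sum.inr ())))
    rintro (j | u) hx
    · exact Or.inl ⟨j, hx, rfl⟩
    · exact Or.inr rfl
  · have hBfin : (support (Sum.elim (fun j : {i // i ∉ S} => a j.1)
        (fun _ : Unit => ∑ᶠ i : S, a i.1))).Finite := by
      apply Set.Finite.subset
        (((hafin.preimage (Subtype.val_injective.injOn)).image Sum.inl).union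
          (Set.finite_singleton (Sum.inr ())))
      rintro (j | u) hx
      · exact Or.inl ⟨j, hx, rfl⟩
      · exact Or.inr rfl
    rw [finsum_sumtype _ hBfin]
    simp only [Sum.elim_inl, Sum.elim_inr]
    rw [finsum_unique (fun _ : Unit => ∑ᶠ i : S, a i.1)]
    exact (split_finsum S a hafin) ▸ hasum


/-- If the sumset of a collection (of subsets of a commutative monoid, each containing `0`)
is direct, then the sumset of any contraction is direct as well, and it coincides with the
sumset of the original collection.  In particular any contraction of an additive system is
again an additive system. -/
theorem contraction_isDirect_and_sumset_eq {M : Type*} [AddCommMonoid M]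
    (A : ℕ → Set M) (S : Set ℕ)
    (h0 : ∀ i, 0 ∈ A i) (hdir : IsDirect A) :
    IsDirect (contraction A S) ∧ Sumset (contraction A S) = Sumset A := by
  constructor
  · intro n b b' hb hb'
    obtain ⟨c, hc⟩ := hb.1 (Sum.inr ())
    obtain ⟨c', hc'⟩ := hb'.1 (Sum.inr ())
    have h := hdir n _ _ (expand_repr hb hc) (expand_repr hb' hc')
    funext x
    rcases x with j | u
    · have := congrFun h j.1
      simpa [j.2] using this
    · have hcc' : c = c' := by
        funext i
        have := congrFun h i.1
        simpa [i.2] using this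
      cases u
      rw [hc.2.2, hc'.2.2, hcc']
  · ext n
    constructor
    · rintro ⟨b, hb⟩
      obtain ⟨c, hc⟩ := hb.1 (Sum.inr ())
      exact ⟨_, expand_repr hb hc⟩
    · rintro ⟨a, ha⟩
      exact ⟨_, contract_repr S ha⟩
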